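/- Let q > 3 be an odd prime power, C_0 the nonzero squares of F_q, C_1 the nonsquares, and s, t ∈ {0,1}. Let f_s be a polynomial over F_q whose evaluation map restricts to a bijection from C_s onto C_t. For each integer i with (q+1)/2 ≤ i ≤ q-2, let b_{i,k} ∈ F_q (0 ≤ k ≤ q-1) be the coefficients of the remainder of f_s(x)^(q-1-i) upon division by x^q - x, i.e. f_s(x)^(q-1-i) ≡ Σ_{k=0}^{q-1} b_{i,k} x^k (mod x^q - x). Then for every a ∈ C_s: Σ_{i=(q+1)/2}^{q-2} (-1)^(s+t) · (b_{i,(q-3)/2} + (-1)^s · b_{i,q-2}) · f_s(a)^(i - (q-1)/2) = a. -/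

import Mathlib

open Polynomial Finset

lemma aux_sum_pow {F : Type*} [Field F] [Fintype F] (e : ℕ) (h0 : e ≠ 0) :
    ∑ x : F, x ^ e = if (Fintype.card F - 1) ∣ e then -1 else 0 := by
  classical
  let φ : Fˣ ↪ F := ⟨fun x ↦ x, fun _ _ h => Units.ext h⟩
  have huniv : (univ : Finset Fˣ).map φ = univ \ {0} := by
    ext x
    simp only [mem_map, mem_univ, Function.Embedding.coeFn_mk, true_and, mem_sdiff,
      mem_singleton, φ]
    exact isUnit_iff_ne_zero
  calc
    ∑ x : F, x ^ e = ∑ x ∈ univ \ {(0 : F)}, x ^ e := by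
      rw [← sum_sdiff ({0} : Finset F).subset_univ, sum_singleton, zero_pow h0, add_zero]
    _ = ∑ x : Fˣ, ((x : F) ^ e) := by
      rw [← huniv, Finset.sum_map]
      rfl
    _ = _ := by
      rw [← FiniteField.sum_pow_units F e]

lemma aux_coeff {F : Type*} [Field F] [Fintype F] (Q : Polynomial F) (k : ℕ)
    (hk1 : 1 ≤ k) (hk2 : k ≤ Fintype.card F - 2) :
    ((Q %ₘ (X ^ (Fintype.card F) - X)).coeff k)
      = -∑ c : F, Q.eval c * c ^ (Fintype.card F - 1 - k) := by
  classical
  have hq2 : 2 ≤ Fintype.card F := Fintype.one_lt_card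
  have hq3 : 3 ≤ Fintype.card F := by omega
  have hmonic : (X ^ (Fintype.card F) - X : Polynomial F).Monic := by
    apply monic_X_pow_sub
    have h1q : 1 < Fintype.card F := by omega
    calc degree (X : Polynomial F) = 1 := degree_X
    _ < ((Fintype.card F : ℕ) : WithBot ℕ) := by exact_mod_cast h1q
  have heval : ∀ c : F, (Q %ₘ (X ^ (Fintype.card F) - X)).eval c = Q.eval c := by
    intro c
    conv_rhs => rw [← modByMonic_add_div Q (X ^ (Fintype.card F) - X)]
    simp only [eval_add, eval_mul, eval_sub, eval_pow, eval_X, FiniteField.pow_card,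
      sub_self, zero_mul, add_zero]
  have hdeg : (Q %ₘ (X ^ (Fintype.card F) - X)).natDegree < Fintype.card F := by
    by_cases h0 : (Q %ₘ (X ^ (Fintype.card F) - X)) = 0
    · rw [h0, natDegree_zero]; omega
    · have h1 : (Q %ₘ (X ^ (Fintype.card F) - X)).degree
          < (X ^ (Fintype.card F) - X : Polynomial F).degree := degree_modByMonic_lt Q hmonic
      have h2 : (X ^ (Fintype.card F) - X : Polynomial F).degree = (Fintype.card F : ℕ) := by
        rw [degree_sub_eq_left_of_degree_lt]
        · exact degree_X_pow _
        · have h1q : 1 < Fintype.card F := by omega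
          rw [degree_X_pow, degree_X]
          exact_mod_cast h1q
      rw [h2] at h1
      exact (natDegree_lt_iff_degree_lt h0).mpr h1
  have key : ∑ c : F, Q.eval c * c ^ (Fintype.card F - 1 - k)
      = -(Q %ₘ (X ^ (Fintype.card F) - X)).coeff k := by
    calc ∑ c : F, Q.eval c * c ^ (Fintype.card F - 1 - k)
        = ∑ c : F, ∑ j ∈ range (Fintype.card F),
            (Q %ₘ (X ^ (Fintype.card F) - X)).coeff j * c ^ (j + (Fintype.card F - 1 - k)) := by
          refine Finset.sum_congr rfl fun c _ => ?_
          rw [← heval c, eval_eq_sum_range' hdeg, Finset.sum_mul]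
          refine Finset.sum_congr rfl fun j _ => ?_
          rw [pow_add, mul_assoc]
      _ = ∑ j ∈ range (Fintype.card F), (Q %ₘ (X ^ (Fintype.card F) - X)).coeff j
            * ∑ c : F, c ^ (j + (Fintype.card F - 1 - k)) := by
          rw [Finset.sum_comm]
          exact Finset.sum_congr rfl fun j _ => by rw [Finset.mul_sum]
      _ = -(Q %ₘ (X ^ (Fintype.card F) - X)).coeff k := by
          rw [Finset.sum_eq_single k]
          · have h1 : k + (Fintype.card F - 1 - k) = Fintype.card F - 1 := by omega
            rw [h1, aux_sum_pow (Fintype.card F - 1) (by omega), if_pos dvd_rfl, mul_neg_one]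
          · intro j hj hjk
            have hjq : j < Fintype.card F := Finset.mem_range.mp hj
            rw [aux_sum_pow _ (by omega), if_neg, mul_zero]
            rintro ⟨d, hd⟩
            have hd0 : d ≠ 0 := by rintro rfl; omega
            have hd2 : d < 2 := by
              by_contra h
              push_neg at h
              have h2d : (Fintype.card F - 1) * 2 ≤ (Fintype.card F - 1) * d :=
                Nat.mul_le_mul_left _ h
              omega
            have hd1 : d = 1 := by omega
            rw [hd1, mul_one] at hd
            omega
          · intro hk
            exact absurd (Finset.mem_range.mpr (by omega)) hk
  rw [key, neg_neg]

lemma aux_inner {F : Type*} [Field F] (r : ℕ) (hr : 2 ≤ r) (u v e : F)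
    [Decidable (v = u)] (he : e = 1 ∨ e = -1) (hu : u ≠ 0) (hv : v ≠ 0) (hum : u ^ r = e) (hvm : v ^ r = e) :
    ∑ j ∈ Finset.Icc 1 (r - 1), v ^ (r - j) * u ^ j
      = if v = u then ((r : F) - 1) * e else -e := by
  have he0 : e ≠ 0 := by rcases he with rfl | rfl <;> simp
  by_cases hvu : v = u
  · subst hvu
    rw [if_pos rfl]
    have : ∀ j ∈ Finset.Icc 1 (r - 1), v ^ (r - j) * v ^ j = e := by
      intro j hj
      rw [Finset.mem_Icc] at hj
      rw [← pow_add]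
      rw [show r - j + j = r by omega, hvm]
    rw [Finset.sum_congr rfl this, Finset.sum_const, Nat.card_Icc]
    have : (r - 1 + 1 - 1 : ℕ) = r - 1 := by omega
    rw [this, nsmul_eq_mul, Nat.cast_sub (by omega), Nat.cast_one]
  · rw [if_neg hvu]
    set x := u * v⁻¹ with hx
    have hxu : u = v * x := by rw [hx, mul_comm u, ← mul_assoc, mul_inv_cancel₀ hv, one_mul]
    have hx1 : x ≠ 1 := by
      intro h
      apply hvu
      rw [hxu, h, mul_one]
    have hxr : x ^ r = 1 := by
      rw [hx, mul_pow, hum, inv_pow, hvm]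
      exact mul_inv_cancel₀ he0
    have hterm : ∀ j ∈ Finset.Icc 1 (r - 1), v ^ (r - j) * u ^ j = e * x ^ j := by
      intro j hj
      rw [Finset.mem_Icc] at hj
      rw [hxu, mul_pow, ← mul_assoc, ← pow_add, show r - j + j = r by omega, hvm]
    rw [Finset.sum_congr rfl hterm, ← Finset.mul_sum]
    have hins : insert 0 (Finset.Icc 1 (r - 1)) = Finset.range r := by
      ext j
      simp only [Finset.mem_insert, Finset.mem_Icc, Finset.mem_range]
      omega
    have hgeom : ∑ j ∈ Finset.range r, x ^ j = 0 := by
      rw [geom_sum_eq hx1, hxr, sub_self, zero_div]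
    rw [← hins, Finset.sum_insert (by simp)] at hgeom
    have : ∑ j ∈ Finset.Icc 1 (r - 1), x ^ j = -1 := by
      rw [pow_zero] at hgeom; linear_combination hgeom
    rw [this, mul_neg_one]

open Polynomial Finset

lemma aux_mem {F : Type*} [Field F] [Fintype F] (hchar : ringChar F ≠ 2) (r : ℕ)
    (hdiv : Fintype.card F / 2 = r) (s : ℕ) (hs : s = 0 ∨ s = 1) (C : Set F)
    (hC : C = if s = 0 then {x : F | x ≠ 0 ∧ IsSquare x}
              else {x : F | x ≠ 0 ∧ ¬ IsSquare x}) :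
    ∀ x : F, x ∈ C ↔ x ≠ 0 ∧ x ^ r = (-1 : F) ^ s := by
  intro x
  subst hdiv
  rcases hs with rfl | rfl
  · simp only [hC, if_pos rfl, Set.mem_setOf_eq, pow_zero]
    constructor
    · rintro ⟨h0, hsq⟩; exact ⟨h0, (FiniteField.isSquare_iff hchar h0).mp hsq⟩
    · rintro ⟨h0, hpow⟩; exact ⟨h0, (FiniteField.isSquare_iff hchar h0).mpr hpow⟩
  · have h11 := Ring.neg_one_ne_one_of_char_ne_two hchar
    simp only [hC, if_neg one_ne_zero, Set.mem_setOf_eq, pow_one]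
    constructor
    · rintro ⟨h0, hsq⟩
      refine ⟨h0, ?_⟩
      rcases FiniteField.pow_dichotomy hchar h0 with h | h
      · exact absurd ((FiniteField.isSquare_iff hchar h0).mpr h) hsq
      · exact h
    · rintro ⟨h0, hpow⟩
      refine ⟨h0, fun hsq => ?_⟩
      rw [(FiniteField.isSquare_iff hchar h0).mp hsq] at hpow
      exact h11 hpow.symm

theorem stmt_7 {F : Type*} [Field F] [Fintype F] (hodd : Odd (Fintype.card F))
    (hq3 : 3 < Fintype.card F)
    (s t : ℕ) (hs : s = 0 ∨ s = 1) (ht : t = 0 ∨ t = 1)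
    (Cs Ct : Set F)
    (hCs : Cs = if s = 0 then {x : F | x ≠ 0 ∧ IsSquare x}
                else {x : F | x ≠ 0 ∧ ¬ IsSquare x})
    (hCt : Ct = if t = 0 then {x : F | x ≠ 0 ∧ IsSquare x}
                else {x : F | x ≠ 0 ∧ ¬ IsSquare x})
    (P : Polynomial F)
    (hbij : Set.BijOn (fun a => P.eval a) Cs Ct)
    (b : ℕ → ℕ → F)
    (hb : ∀ i k, b i k = ((P ^ (Fintype.card F - 1 - i)) %ₘ
        (X ^ (Fintype.card F) - X)).coeff k) :
    ∀ a ∈ Cs,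
      ∑ i ∈ Finset.Icc ((Fintype.card F + 1) / 2) (Fintype.card F - 2),
        (-1 : F) ^ (s + t) *
          (b i ((Fintype.card F - 3) / 2) + (-1 : F) ^ s * b i (Fintype.card F - 2)) *
          (P.eval a) ^ (i - (Fintype.card F - 1) / 2) = a := by
  classical
  intro a ha
  obtain ⟨r, hr⟩ := hodd
  have hr2 : 2 ≤ r := by omega
  have hchar : ringChar F ≠ 2 := by
    intro h
    have := FiniteField.even_card_of_char_two h
    omega
  have hdiv2 : Fintype.card F / 2 = r := by omega
  have hmemS := aux_mem hchar r hdiv2 s hs Cs hCs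
  have hmemT := aux_mem hchar r hdiv2 t ht Ct hCt
  have ha0 : a ≠ 0 := ((hmemS a).mp ha).1
  have har : a ^ r = (-1 : F) ^ s := ((hmemS a).mp ha).2
  have hua : P.eval a ∈ Ct := hbij.mapsTo ha
  have hu0 : P.eval a ≠ 0 := ((hmemT _).mp hua).1
  have hur : (P.eval a) ^ r = (-1 : F) ^ t := ((hmemT _).mp hua).2
  have hes : (-1 : F) ^ s = 1 ∨ (-1 : F) ^ s = -1 := by rcases hs with rfl | rfl <;> simp
  have het : (-1 : F) ^ t = 1 ∨ (-1 : F) ^ t = -1 := by rcases ht with rfl | rfl <;> simp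
  have hst : (-1 : F) ^ (s + t) = (-1 : F) ^ s * (-1 : F) ^ t := pow_add _ _ _
  have hcast : (r : F) * 2 + 1 = 0 := by
    have h0 := FiniteField.cast_card_eq_zero F
    rw [hr] at h0
    push_cast at h0
    linear_combination h0
  rw [show (Fintype.card F + 1) / 2 = r + 1 by omega,
      show Fintype.card F - 2 = 2 * r - 1 by omega,
      show (Fintype.card F - 3) / 2 = r - 1 by omega,
      show (Fintype.card F - 1) / 2 = r by omega]
  have step1 : ∀ i ∈ Finset.Icc (r + 1) (2 * r - 1),
      (-1 : F) ^ (s + t) * (b i (r - 1) + (-1 : F) ^ s * b i (2 * r - 1)) *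
        (P.eval a) ^ (i - r)
      = ∑ c : F, (-(-1 : F) ^ (s + t)) * (c ^ (r + 1) + (-1 : F) ^ s * c) *
          ((P.eval c) ^ (2 * r - i) * (P.eval a) ^ (i - r)) := by
    intro i hi
    rw [Finset.mem_Icc] at hi
    rw [hb i (r - 1), hb i (2 * r - 1),
        aux_coeff _ _ (by omega) (by omega),
        aux_coeff _ _ (by omega) (by omega)]
    simp only [eval_pow]
    rw [show Fintype.card F - 1 - (r - 1) = r + 1 by omega,
        show Fintype.card F - 1 - (2 * r - 1) = 1 by omega,
        show Fintype.card F - 1 - i = 2 * r - i by omega]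
    simp only [Finset.mul_sum, Finset.sum_mul, ← Finset.sum_neg_distrib,
      ← Finset.sum_add_distrib]
    refine Finset.sum_congr rfl fun c _ => ?_
    ring
  calc ∑ i ∈ Finset.Icc (r + 1) (2 * r - 1),
        (-1 : F) ^ (s + t) * (b i (r - 1) + (-1 : F) ^ s * b i (2 * r - 1)) *
          (P.eval a) ^ (i - r)
      = ∑ i ∈ Finset.Icc (r + 1) (2 * r - 1), ∑ c : F,
          (-(-1 : F) ^ (s + t)) * (c ^ (r + 1) + (-1 : F) ^ s * c) *
          ((P.eval c) ^ (2 * r - i) * (P.eval a) ^ (i - r)) :=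
        Finset.sum_congr rfl step1
    _ = ∑ c : F, ∑ i ∈ Finset.Icc (r + 1) (2 * r - 1),
          (-(-1 : F) ^ (s + t)) * (c ^ (r + 1) + (-1 : F) ^ s * c) *
          ((P.eval c) ^ (2 * r - i) * (P.eval a) ^ (i - r)) := Finset.sum_comm
    _ = ∑ c : F, (-(-1 : F) ^ (s + t)) * (c ^ (r + 1) + (-1 : F) ^ s * c) *
          ∑ j ∈ Finset.Icc 1 (r - 1), (P.eval c) ^ (r - j) * (P.eval a) ^ j := by
        refine Finset.sum_congr rfl fun c _ => ?_
        rw [← Finset.mul_sum]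
        congr 1
        refine Finset.sum_nbij' (fun i => i - r) (fun j => j + r) ?_ ?_ ?_ ?_ ?_
        · intro i hi; simp only [Finset.mem_Icc] at hi ⊢; omega
        · intro j hj; simp only [Finset.mem_Icc] at hj ⊢; omega
        · intro i hi; simp only [Finset.mem_Icc] at hi; omega
        · intro j hj; simp only [Finset.mem_Icc] at hj; omega
        · intro i hi; simp only [Finset.mem_Icc] at hi
          rw [show 2 * r - i = r - (i - r) by omega]
    _ = ∑ c : F, ((-1 : F) ^ (s + t) * (-1 : F) ^ t * (c ^ (r + 1) + (-1 : F) ^ s * c)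
          + (if c = a then a else 0)) := by
        refine Finset.sum_congr rfl fun c _ => ?_
        by_cases hcs : c ∈ Cs
        · have hc0 : c ≠ 0 := ((hmemS c).mp hcs).1
          have hcr : c ^ r = (-1 : F) ^ s := ((hmemS c).mp hcs).2
          have hvct : P.eval c ∈ Ct := hbij.mapsTo hcs
          have hv0 : P.eval c ≠ 0 := ((hmemT _).mp hvct).1
          have hvr : (P.eval c) ^ r = (-1 : F) ^ t := ((hmemT _).mp hvct).2
          rw [aux_inner r hr2 (P.eval a) (P.eval c) ((-1 : F) ^ t) het hu0 hv0 hur hvr]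
          by_cases hca : c = a
          · subst hca
            rw [if_pos rfl, if_pos rfl, pow_succ, hcr, hst]
            rcases hes with h | h <;> rcases het with h' | h' <;> rw [h, h'] <;>
              linear_combination (-c) * hcast
          · have hne : P.eval c ≠ P.eval a := fun h => hca (hbij.injOn hcs ha h)
            rw [if_neg hne, if_neg hca, add_zero, hst]
            ring
        · have hca : c ≠ a := fun h => hcs (h ▸ ha)
          have hw : c ^ (r + 1) + (-1 : F) ^ s * c = 0 := by
            by_cases hc0 : c = 0
            · subst hc0; rw [zero_pow (by omega), mul_zero, add_zero]
            · have hcrne : c ^ r ≠ (-1 : F) ^ s := by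
                intro h
                exact hcs ((hmemS c).mpr ⟨hc0, h⟩)
              have hdich := FiniteField.pow_dichotomy hchar hc0
              rw [hdiv2] at hdich
              have hcr : c ^ r = -((-1 : F) ^ s) := by
                rcases hdich with h | h
                · rcases hes with h' | h'
                  · exact absurd (h.trans h'.symm) hcrne
                  · rw [h, h']; ring
                · rcases hes with h' | h'
                  · rw [h, h']
                  · exact absurd (h.trans h'.symm) hcrne
              rw [pow_succ, hcr]
              ring
          rw [hw, if_neg hca]
          ring
    _ = (-1 : F) ^ (s + t) * (-1 : F) ^ t *
          (∑ c : F, (c ^ (r + 1) + (-1 : F) ^ s * c)) + a := by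
        rw [Finset.sum_add_distrib, ← Finset.mul_sum]
        congr 1
        simp
    _ = a := by
        have h1 : ∑ c : F, (c ^ (r + 1) + (-1 : F) ^ s * c) = 0 := by
          rw [Finset.sum_add_distrib, ← Finset.mul_sum]
          have e1 : ∑ c : F, c = ∑ c : F, c ^ 1 := by simp
          rw [e1, aux_sum_pow (r + 1) (by omega), aux_sum_pow 1 (by omega), if_neg, if_neg]
          · ring
          · intro hdvd
            have := Nat.le_of_dvd (by omega) hdvd
            omega
          · intro hdvd
            have := Nat.le_of_dvd (by omega) hdvd
            omega
        rw [h1, mul_zero, zero_add]
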